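/- Let 0 ≤ k ≤ n be integers and let S ∈ {n;k} with Out(S) = ∅. Then the map T ↦ Out(T) is a bijection from {T ∈ {n;k} : T ≤_adm S} onto the set of subsets of In(S), and for T, T′ in this set one has T ≤_adm T′ if and only if Out(T′) ⊆ Out(T). In particular this map is an isomorphism of posets from ({T : T ≤_adm S}, ≤_adm) to the opposite of the poset of subsets of In(S) ordered by inclusion. -/

import Mathlib

open scoped BigOperators

/-- `{n;k}`: the set of subsets of `{1,…,n}` of cardinality `k`. -/
def Sset (n k : ℕ) : Finset (Finset ℕ) := (Finset.Icc 1 n).powersetCard k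

/-- `elt S r` is `s_r`, the `r`-th smallest element of `S` (1-indexed); junk value `0` out of range. -/
def elt (S : Finset ℕ) (r : ℕ) : ℕ := (S.sort (· ≤ ·)).getD (r - 1) 0

/-- `s_{r+1}`, with the convention `s_{k+1} = n+1`. -/
def nxt (n : ℕ) (S : Finset ℕ) (r : ℕ) : ℕ := if r = S.card then n + 1 else elt S (r + 1)

/-- `s_{r-1}`, with the convention `s_0 = 0`. -/
def prv (S : Finset ℕ) (r : ℕ) : ℕ := if r = 1 then 0 else elt S (r - 1)

/-- `S_r`: the set obtained from `S` by replacing `s_r` with `s_r + 1`. -/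
def Sr (S : Finset ℕ) (r : ℕ) : Finset ℕ := insert (elt S r + 1) (S.erase (elt S r))

/-- `In(S) = {i ∈ {1,…,k} : s_i ≡ k (mod 2) and s_{i−1} < s_i − 1}` (convention `s_0 = 0`). -/
def InS (k : ℕ) (S : Finset ℕ) : Finset ℕ :=
  (Finset.Icc 1 k).filter fun i => elt S i % 2 = k % 2 ∧ prv S i + 1 < elt S i

/-- `Out(S) = {i ∈ {1,…,k} : s_i ≢ k (mod 2) and s_i + 1 < s_{i+1}}` (convention `s_{k+1} = n+1`). -/
def OutS (n k : ℕ) (S : Finset ℕ) : Finset ℕ :=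
  (Finset.Icc 1 k).filter fun i => ¬ (elt S i % 2 = k % 2) ∧ elt S i + 1 < nxt n S i

/-- An elementary admissible step `S ⋖ S_r`, for `1 ≤ r ≤ k` with `s_{r+1} − s_r > 1`
and `k − s_r` odd. -/
def AdmStep (n k : ℕ) (S T : Finset ℕ) : Prop :=
  ∃ r, 1 ≤ r ∧ r ≤ k ∧ 1 < nxt n S r - elt S r ∧ Odd ((k : ℤ) - elt S r) ∧ T = Sr S r

/-- The admissible order `≤_adm`: the reflexive-transitive closure of elementary steps. -/
def AdmLE (n k : ℕ) (S T : Finset ℕ) : Prop := Relation.ReflTransGen (AdmStep n k) S T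

section Basic
variable {n k : ℕ}

lemma mem_Sset {T : Finset ℕ} : T ∈ Sset n k ↔ T ⊆ Finset.Icc 1 n ∧ T.card = k := by
  simp [Sset, Finset.mem_powersetCard]

lemma sort_length {T : Finset ℕ} (hT : T ∈ Sset n k) : (T.sort (· ≤ ·)).length = k := by
  rw [Finset.length_sort]; exact (mem_Sset.1 hT).2

lemma card_eq {T : Finset ℕ} (hT : T ∈ Sset n k) : T.card = k := (mem_Sset.1 hT).2

lemma elt_eq_getElem {T : Finset ℕ} (hT : T ∈ Sset n k) {r : ℕ} (h1 : 1 ≤ r) (h2 : r ≤ k) :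
    elt T r = (T.sort (· ≤ ·))[r - 1]'(by rw [sort_length hT]; omega) := by
  unfold elt
  exact List.getD_eq_getElem _ _ _

lemma elt_mem {T : Finset ℕ} (hT : T ∈ Sset n k) {r : ℕ} (h1 : 1 ≤ r) (h2 : r ≤ k) :
    elt T r ∈ T := by
  rw [elt_eq_getElem hT h1 h2]
  rw [← Finset.mem_sort (α := ℕ) (· ≤ ·)]
  exact List.getElem_mem _

lemma elt_lt_elt {T : Finset ℕ} (hT : T ∈ Sset n k) {r r' : ℕ} (h1 : 1 ≤ r) (h : r < r')
    (h2 : r' ≤ k) : elt T r < elt T r' := by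
  rw [elt_eq_getElem hT h1 (by omega), elt_eq_getElem hT (by omega) h2]
  exact List.pairwise_iff_getElem.1 (Finset.sortedLT_sort T).pairwise _ _ _ _ (by omega)

lemma elt_mem_Icc {T : Finset ℕ} (hT : T ∈ Sset n k) {r : ℕ} (h1 : 1 ≤ r) (h2 : r ≤ k) :
    elt T r ∈ Finset.Icc 1 n := (mem_Sset.1 hT).1 (elt_mem hT h1 h2)

lemma one_le_elt {T : Finset ℕ} (hT : T ∈ Sset n k) {r : ℕ} (h1 : 1 ≤ r) (h2 : r ≤ k) :
    1 ≤ elt T r := (Finset.mem_Icc.1 (elt_mem_Icc hT h1 h2)).1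

lemma elt_le_n {T : Finset ℕ} (hT : T ∈ Sset n k) {r : ℕ} (h1 : 1 ≤ r) (h2 : r ≤ k) :
    elt T r ≤ n := (Finset.mem_Icc.1 (elt_mem_Icc hT h1 h2)).2

lemma elt_lt_nxt {T : Finset ℕ} (hT : T ∈ Sset n k) {r : ℕ} (h1 : 1 ≤ r) (h2 : r ≤ k) :
    elt T r < nxt n T r := by
  unfold nxt
  rw [card_eq hT]
  split
  · have := elt_le_n hT h1 h2; omega
  · exact elt_lt_elt hT h1 (by omega) (by omega)

lemma nxt_le {T : Finset ℕ} (hT : T ∈ Sset n k) {r : ℕ} (h1 : 1 ≤ r) (h2 : r ≤ k) :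
    nxt n T r ≤ n + 1 := by
  unfold nxt
  rw [card_eq hT]
  split
  · omega
  · have := elt_le_n hT (r := r + 1) (by omega) (by omega); omega

lemma mem_iff_elt {T : Finset ℕ} (hT : T ∈ Sset n k) {x : ℕ} :
    x ∈ T ↔ ∃ r, 1 ≤ r ∧ r ≤ k ∧ elt T r = x := by
  constructor
  · intro hx
    rw [← Finset.mem_sort (α := ℕ) (· ≤ ·)] at hx
    obtain ⟨i, hi, hix⟩ := List.getElem_of_mem hx
    refine ⟨i + 1, by omega, by have := sort_length hT; omega, ?_⟩
    rw [elt_eq_getElem hT (by omega) (by have := sort_length hT; omega)]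
    simpa using hix
  · rintro ⟨r, h1, h2, rfl⟩
    exact elt_mem hT h1 h2

/-- Two sets in `Sset n k` with the same `elt` function are equal. -/
lemma ext_elt {T T' : Finset ℕ} (hT : T ∈ Sset n k) (hT' : T' ∈ Sset n k)
    (h : ∀ r, 1 ≤ r → r ≤ k → elt T r = elt T' r) : T = T' := by
  have : T.sort (· ≤ ·) = T'.sort (· ≤ ·) := by
    apply List.ext_getElem (by rw [sort_length hT, sort_length hT'])
    intro i hi hi'
    have hik : i < k := by rwa [sort_length hT] at hi
    have h1 := h (i + 1) (by omega) (by omega)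
    rw [elt_eq_getElem hT (by omega) (by omega), elt_eq_getElem hT' (by omega) (by omega)] at h1
    simpa using h1
  have := congrArg List.toFinset this
  rwa [Finset.sort_toFinset, Finset.sort_toFinset] at this

/-- Building a set from a strictly monotone function on `[1,k]`. -/
lemma build {f : ℕ → ℕ} (hmono : ∀ i j, 1 ≤ i → i < j → j ≤ k → f i < f j)
    (hrange : ∀ i, 1 ≤ i → i ≤ k → f i ∈ Finset.Icc 1 n) :
    (Finset.Icc 1 k).image f ∈ Sset n k ∧
      ∀ r, 1 ≤ r → r ≤ k → elt ((Finset.Icc 1 k).image f) r = f r := by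
  set T := (Finset.Icc 1 k).image f with hTdef
  set L := (List.range k).map (fun i => f (i + 1)) with hLdef
  have hLnodup : L.Nodup := by
    refine List.Nodup.map_on ?_ (List.nodup_range (n := k))
    intro i hi j hj hij
    simp only [List.mem_range] at hi hj
    by_contra hne
    rcases Nat.lt_or_ge i j with h | h
    · have := hmono (i+1) (j+1) (by omega) (by omega) (by omega); omega
    · have := hmono (j+1) (i+1) (by omega) (by omega) (by omega); omega
  have hLsorted : L.Pairwise (· ≤ ·) := by
    rw [List.pairwise_iff_getElem]
    intro i j hi hj hij
    simp only [hLdef, List.getElem_map, List.getElem_range]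
    have hjk : j < k := by simpa [hLdef] using hj
    exact le_of_lt (hmono (i+1) (j+1) (by omega) (by omega) (by omega))
  have hperm : L.Perm (T.sort (· ≤ ·)) := by
    rw [List.perm_ext_iff_of_nodup hLnodup (Finset.sort_nodup _ _)]
    intro a
    simp only [hLdef, List.mem_map, List.mem_range, Finset.mem_sort, hTdef,
      Finset.mem_image, Finset.mem_Icc]
    constructor
    · rintro ⟨i, hi, rfl⟩; exact ⟨i + 1, ⟨by omega, by omega⟩, rfl⟩
    · rintro ⟨i, ⟨h1, h2⟩, rfl⟩; exact ⟨i - 1, by omega, by congr 1; omega⟩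
  have hLeq : T.sort (· ≤ ·) = L :=
    (List.Perm.eq_of_pairwise' hLsorted (Finset.pairwise_sort _ _) hperm).symm
  have hTmem : T ∈ Sset n k := by
    rw [mem_Sset]
    constructor
    · intro x hx
      simp only [hTdef, Finset.mem_image, Finset.mem_Icc] at hx
      obtain ⟨i, ⟨h1, h2⟩, rfl⟩ := hx
      exact hrange i h1 h2
    · have : (T.sort (· ≤ ·)).length = T.card := Finset.length_sort _
      rw [hLeq] at this
      simp [hLdef] at this
      omega
  refine ⟨hTmem, fun r h1 h2 => ?_⟩
  rw [elt_eq_getElem hTmem h1 h2]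
  have : r - 1 < L.length := by simp [hLdef]; omega
  simp only [hLeq, hLdef, List.getElem_map, List.getElem_range]
  congr 1
  omega

end Basic

section Step
variable {n k : ℕ}

lemma nxt_eq {T : Finset ℕ} (hT : T ∈ Sset n k) (i : ℕ) :
    nxt n T i = if i = k then n + 1 else elt T (i + 1) := by
  unfold nxt; rw [card_eq hT]

lemma mem_OutS_iff {T : Finset ℕ} (hT : T ∈ Sset n k) {i : ℕ} :
    i ∈ OutS n k T ↔ 1 ≤ i ∧ i ≤ k ∧ ¬(elt T i % 2 = k % 2) ∧
      elt T i + 1 < (if i = k then n + 1 else elt T (i + 1)) := by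
  simp only [OutS, Finset.mem_filter, Finset.mem_Icc, nxt_eq hT]
  tauto

lemma mem_InS_iff {S : Finset ℕ} {i : ℕ} :
    i ∈ InS k S ↔ 1 ≤ i ∧ i ≤ k ∧ elt S i % 2 = k % 2 ∧
      (if i = 1 then 0 else elt S (i - 1)) + 1 < elt S i := by
  simp only [InS, Finset.mem_filter, Finset.mem_Icc]
  simp only [prv]
  tauto

lemma odd_iff_mod (a b : ℕ) : Odd ((b : ℤ) - a) ↔ ¬ (a % 2 = b % 2) := by
  rw [Int.odd_iff]
  omega

/-- Computation of `Sr T r`. -/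
lemma step_elt {T : Finset ℕ} (hT : T ∈ Sset n k) {r : ℕ} (h1 : 1 ≤ r) (h2 : r ≤ k)
    (hgap : elt T r + 1 < nxt n T r) :
    Sr T r ∈ Sset n k ∧
      ∀ j, 1 ≤ j → j ≤ k → elt (Sr T r) j = elt T j + if j = r then 1 else 0 := by
  set f : ℕ → ℕ := fun j => elt T j + if j = r then 1 else 0 with hf
  have hgap' : r = k ∨ (r < k ∧ elt T r + 1 < elt T (r + 1)) := by
    rw [nxt_eq hT] at hgap
    by_cases h : r = k
    · left; exact h
    · right; exact ⟨by omega, by simpa [h] using hgap⟩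
  have hmono : ∀ i j, 1 ≤ i → i < j → j ≤ k → f i < f j := by
    intro i j hi hij hjk
    have hent : elt T i < elt T j := elt_lt_elt hT hi hij hjk
    have hir' : r < j → r < k → elt T r + 1 < elt T j := by
      intro hrj hrk
      rcases hgap' with h | ⟨h, hlt⟩
      · omega
      · have hle : elt T (r + 1) ≤ elt T j := by
          rcases Nat.eq_or_lt_of_le (show r + 1 ≤ j from hrj) with h' | h'
          · rw [h']
          · exact le_of_lt (elt_lt_elt hT (by omega) h' hjk)
        omega
    simp only [hf]
    split_ifs with hA hB hB
    · omega
    · subst hA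
      rcases hgap' with hrk | ⟨hrk, _⟩
      · omega
      · have := hir' (by omega) hrk; omega
    · omega
    · omega
  have hrange : ∀ i, 1 ≤ i → i ≤ k → f i ∈ Finset.Icc 1 n := by
    intro i hi hik
    simp only [hf, Finset.mem_Icc]
    by_cases hir : i = r
    · subst hir
      simp
      have h1' := one_le_elt hT hi hik
      have hn := nxt_le hT h1 h2
      omega
    · simp only [if_neg hir, add_zero]
      exact ⟨one_le_elt hT hi hik, elt_le_n hT hi hik⟩
  obtain ⟨hmem, helt⟩ := build (n := n) hmono hrange
  have hset : Sr T r = (Finset.Icc 1 k).image f := by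
    ext x
    simp only [Sr, Finset.mem_insert, Finset.mem_erase, Finset.mem_image, Finset.mem_Icc]
    constructor
    · rintro (rfl | ⟨hne, hx⟩)
      · exact ⟨r, ⟨h1, h2⟩, by simp [hf]⟩
      · obtain ⟨j, hj1, hj2, rfl⟩ := (mem_iff_elt hT).1 hx
        have hjr : j ≠ r := by rintro rfl; exact hne rfl
        exact ⟨j, ⟨hj1, hj2⟩, by simp [hf, hjr]⟩
    · rintro ⟨j, ⟨hj1, hj2⟩, rfl⟩
      by_cases hjr : j = r
      · subst hjr; left; simp [hf]
      · right
        simp only [hf, if_neg hjr, add_zero]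
        refine ⟨?_, elt_mem hT hj1 hj2⟩
        intro heq
        rcases Nat.lt_or_ge j r with h | h
        · have := elt_lt_elt hT hj1 h h2; omega
        · have := elt_lt_elt hT h1 (by omega) hj2; omega
  rw [hset]
  exact ⟨hmem, helt⟩

end Step

section Main
variable {n k : ℕ} {S : Finset ℕ}

/-- The invariant: `T` is in `Sset n k`, `Out T ⊆ In S`, and `T` is obtained from `S` by
decreasing `s_j` by one exactly for `j ∈ Out T`. -/
def Good (n k : ℕ) (S T : Finset ℕ) : Prop :=
  T ∈ Sset n k ∧ OutS n k T ⊆ InS k S ∧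
    ∀ j, 1 ≤ j → j ≤ k → elt T j + (if j ∈ OutS n k T then 1 else 0) = elt S j

lemma good_self (hS : S ∈ Sset n k) (hout : OutS n k S = ∅) : Good n k S S :=
  ⟨hS, by simp [hout], fun j _ _ => by rw [hout]; simp⟩

lemma step_back (hS : S ∈ Sset n k) {T U : Finset ℕ} (hT : T ∈ Sset n k)
    (hU : Good n k S U) (h : AdmStep n k T U) :
    Good n k S T ∧ ∃ r, r ∉ OutS n k U ∧ OutS n k T = insert r (OutS n k U) := by
  obtain ⟨r, hr1, hr2, hgap, hodd, rfl⟩ := h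
  obtain ⟨hUS, hUsub, hUeq⟩ := hU
  have hlt := elt_lt_nxt hT hr1 hr2
  obtain ⟨hUS', helt⟩ := step_elt hT hr1 hr2 (by omega)
  have hpar : ¬ (elt T r % 2 = k % 2) := (odd_iff_mod _ _).1 hodd
  have heltr : elt (Sr T r) r = elt T r + 1 := by
    have := helt r hr1 hr2; simpa using this
  have heltj : ∀ j, 1 ≤ j → j ≤ k → j ≠ r → elt (Sr T r) j = elt T j := by
    intro j h1 h2 hjr
    have := helt j h1 h2; rw [if_neg hjr] at this; omega
  have hgapr : elt T r + 1 < (if r = k then n + 1 else elt T (r + 1)) := by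
    rw [← nxt_eq hT]; omega
  have hrnotin : r ∉ OutS n k (Sr T r) := by
    intro hmem
    obtain ⟨_, _, hp, _⟩ := (mem_OutS_iff hUS').1 hmem
    rw [heltr] at hp
    omega
  have hOut : OutS n k T = insert r (OutS n k (Sr T r)) := by
    ext i
    rw [Finset.mem_insert, mem_OutS_iff hT, mem_OutS_iff hUS']
    by_cases hik : 1 ≤ i ∧ i ≤ k
    · obtain ⟨hi1, hik2⟩ := hik
      by_cases hir : i = r
      · subst hir
        exact iff_of_true ⟨hr1, hr2, hpar, hgapr⟩ (Or.inl rfl)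
      · have eqi := heltj i hi1 hik2 hir
        by_cases hikk : i = k
        · rw [if_pos hikk, if_pos hikk]; omega
        · have eq2 := helt (i + 1) (by omega) (by omega)
          simp only [if_neg hikk]
          by_cases h2r : i + 1 = r
          · rw [if_pos h2r] at eq2
            rw [h2r] at eq2 ⊢
            omega
          · rw [if_neg h2r] at eq2
            omega
    · constructor
      · rintro ⟨h1, h2, -⟩; exact absurd ⟨h1, h2⟩ hik
      · rintro (rfl | ⟨h1, h2, -⟩)
        · exact absurd ⟨hr1, hr2⟩ hik
        · exact absurd ⟨h1, h2⟩ hik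
  have hSr : elt (Sr T r) r + (if r ∈ OutS n k (Sr T r) then 1 else 0) = elt S r :=
    hUeq r hr1 hr2
  rw [if_neg hrnotin, add_zero] at hSr
  have hrIn : r ∈ InS k S := by
    rw [mem_InS_iff]
    refine ⟨hr1, hr2, by omega, ?_⟩
    by_cases hr1' : r = 1
    · rw [if_pos hr1']
      have := one_le_elt hT hr1 hr2
      omega
    · rw [if_neg hr1']
      have hprev := hUeq (r - 1) (by omega) (by omega)
      have heq3 := heltj (r - 1) (by omega) (by omega) (by omega)
      have hmono := elt_lt_elt hT (r := r - 1) (r' := r) (by omega) (by omega) hr2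
      by_cases hmem : r - 1 ∈ OutS n k (Sr T r)
      · rw [if_pos hmem] at hprev
        obtain ⟨-, -, hp, -⟩ := (mem_OutS_iff hUS').1 hmem
        omega
      · rw [if_neg hmem] at hprev
        omega
  have hTsub : OutS n k T ⊆ InS k S := by
    rw [hOut]
    intro i hi
    rcases Finset.mem_insert.1 hi with rfl | hi'
    · exact hrIn
    · exact hUsub hi'
  have hTeq : ∀ j, 1 ≤ j → j ≤ k → elt T j + (if j ∈ OutS n k T then 1 else 0) = elt S j := by
    intro j h1 h2
    have hU0 := hUeq j h1 h2
    by_cases hjr : j = r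
    · subst hjr
      have hmemT : j ∈ OutS n k T := by rw [hOut]; exact Finset.mem_insert_self _ _
      rw [if_pos hmemT]
      omega
    · have hej := heltj j h1 h2 hjr
      by_cases hmem : j ∈ OutS n k (Sr T r)
      · have hmemT : j ∈ OutS n k T := by rw [hOut]; exact Finset.mem_insert_of_mem hmem
        rw [if_pos hmemT]
        rw [if_pos hmem] at hU0
        omega
      · have hmemT : j ∉ OutS n k T := by
          rw [hOut, Finset.mem_insert]
          rintro (rfl | h')
          · exact hjr rfl
          · exact hmem h'
        rw [if_neg hmemT]
        rw [if_neg hmem] at hU0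
        omega
  exact ⟨⟨hT, hTsub, hTeq⟩, r, hrnotin, hOut⟩

end Main

section TB
variable {n k : ℕ} {S B : Finset ℕ}

/-- The candidate set obtained from `S` by decreasing `s_j` for `j ∈ B`. -/
def gB (S B : Finset ℕ) : ℕ → ℕ := fun j => elt S j - (if j ∈ B then 1 else 0)

def TB (k : ℕ) (S B : Finset ℕ) : Finset ℕ := (Finset.Icc 1 k).image (gB S B)

lemma inS_facts (hS : S ∈ Sset n k) (hB : B ⊆ InS k S) {j : ℕ} (hj : j ∈ B) :
    1 ≤ j ∧ j ≤ k ∧ elt S j % 2 = k % 2 ∧ 2 ≤ elt S j ∧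
      (2 ≤ j → elt S (j - 1) + 1 < elt S j) := by
  have h := mem_InS_iff.1 (hB hj)
  obtain ⟨h1, h2, h3, h4⟩ := h
  by_cases hj1 : j = 1
  · rw [if_pos hj1] at h4
    exact ⟨h1, h2, h3, by omega, by omega⟩
  · rw [if_neg hj1] at h4
    have := one_le_elt hS (r := j - 1) (by omega) (by omega)
    exact ⟨h1, h2, h3, by omega, fun _ => h4⟩

lemma TB_spec (hS : S ∈ Sset n k) (hB : B ⊆ InS k S) :
    TB k S B ∈ Sset n k ∧ ∀ r, 1 ≤ r → r ≤ k → elt (TB k S B) r = gB S B r := by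
  have hmono : ∀ i j, 1 ≤ i → i < j → j ≤ k → gB S B i < gB S B j := by
    intro i j hi hij hjk
    have hlt : elt S i < elt S j := elt_lt_elt hS hi hij hjk
    have hle : gB S B i ≤ elt S i := by unfold gB; split_ifs <;> omega
    unfold gB
    by_cases hjB : j ∈ B
    · rw [if_pos hjB]
      obtain ⟨-, -, -, h4, h5⟩ := inS_facts hS hB hjB
      have h5' := h5 (by omega)
      have hle2 : elt S i ≤ elt S (j - 1) := by
        rcases Nat.eq_or_lt_of_le (show i ≤ j - 1 by omega) with h' | h'
        · rw [h']
        · exact le_of_lt (elt_lt_elt hS hi h' (by omega))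
      omega
    · rw [if_neg hjB]; omega
  have hrange : ∀ i, 1 ≤ i → i ≤ k → gB S B i ∈ Finset.Icc 1 n := by
    intro i hi hik
    have h1 := one_le_elt hS hi hik
    have h2 := elt_le_n hS hi hik
    rw [Finset.mem_Icc]
    unfold gB
    by_cases hiB : i ∈ B
    · rw [if_pos hiB]
      obtain ⟨-, -, -, h4, -⟩ := inS_facts hS hB hiB
      omega
    · rw [if_neg hiB]; omega
  exact build hmono hrange

lemma TB_out (hS : S ∈ Sset n k) (hout : OutS n k S = ∅) (hB : B ⊆ InS k S) :
    OutS n k (TB k S B) = B := by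
  obtain ⟨hTB, helt⟩ := TB_spec hS hB
  ext i
  rw [mem_OutS_iff hTB]
  by_cases hik : 1 ≤ i ∧ i ≤ k
  · obtain ⟨hi1, hik2⟩ := hik
    have hei := helt i hi1 hik2
    have h1S := one_le_elt hS hi1 hik2
    have h2S := elt_le_n hS hi1 hik2
    by_cases hiB : i ∈ B
    · obtain ⟨-, -, hp, h4, -⟩ := inS_facts hS hB hiB
      have heiB : elt (TB k S B) i = elt S i - 1 := by rw [hei]; unfold gB; rw [if_pos hiB]
      refine iff_of_true ⟨hi1, hik2, by omega, ?_⟩ hiB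
      by_cases hikk : i = k
      · rw [if_pos hikk]
        omega
      · rw [if_neg hikk]
        have hei1 := helt (i + 1) (by omega) (by omega)
        have hlt : elt S i < elt S (i + 1) := elt_lt_elt hS hi1 (by omega) (by omega)
        by_cases hi1B : i + 1 ∈ B
        · obtain ⟨-, -, -, -, h5⟩ := inS_facts hS hB hi1B
          have h5' := h5 (by omega)
          simp only [Nat.add_sub_cancel] at h5'
          rw [hei1]
          unfold gB
          rw [if_pos hi1B]
          omega
        · rw [hei1]
          unfold gB
          rw [if_neg hi1B]
          omega
    · have heiB : elt (TB k S B) i = elt S i := by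
        rw [hei]; unfold gB; rw [if_neg hiB]; omega
      have hnotS : i ∉ OutS n k S := by rw [hout]; exact Finset.notMem_empty i
      rw [mem_OutS_iff hS] at hnotS
      refine iff_of_false ?_ hiB
      rintro ⟨-, -, hp, hg⟩
      by_cases hpar : elt S i % 2 = k % 2
      · rw [heiB] at hp; exact hp hpar
      · have hgS : ¬ (elt S i + 1 < if i = k then n + 1 else elt S (i + 1)) := by
          intro hc; exact hnotS ⟨hi1, hik2, hpar, hc⟩
        by_cases hikk : i = k
        · rw [if_pos hikk] at hg hgS
          rw [heiB] at hg
          omega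
        · rw [if_neg hikk] at hg hgS
          have hlt : elt S i < elt S (i + 1) := elt_lt_elt hS hi1 (by omega) (by omega)
          have hei1 := helt (i + 1) (by omega) (by omega)
          by_cases hi1B : i + 1 ∈ B
          · obtain ⟨-, -, -, -, h5⟩ := inS_facts hS hB hi1B
            have h5' := h5 (by omega)
            simp only [Nat.add_sub_cancel] at h5'
            omega
          · rw [hei1] at hg
            unfold gB at hg
            rw [if_neg hi1B] at hg
            rw [heiB] at hg
            omega
  · refine iff_of_false ?_ ?_
    · rintro ⟨h1, h2, -⟩; exact hik ⟨h1, h2⟩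
    · intro hiB
      obtain ⟨h1, h2, -⟩ := inS_facts hS hB hiB
      exact hik ⟨h1, h2⟩

lemma TB_empty (hS : S ∈ Sset n k) : TB k S (∅ : Finset ℕ) = S := by
  obtain ⟨hTB, helt⟩ := TB_spec hS (Finset.empty_subset _)
  apply ext_elt hTB hS
  intro r h1 h2
  rw [helt r h1 h2]
  unfold gB
  simp

lemma TB_step (hS : S ∈ Sset n k) (hout : OutS n k S = ∅) (hB : B ⊆ InS k S)
    {r : ℕ} (hr : r ∈ B) : AdmStep n k (TB k S B) (TB k S (B.erase r)) := by
  obtain ⟨hTB, helt⟩ := TB_spec hS hB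
  have hrOut : r ∈ OutS n k (TB k S B) := by rw [TB_out hS hout hB]; exact hr
  obtain ⟨hr1, hr2, hp, hg⟩ := (mem_OutS_iff hTB).1 hrOut
  have hgap : 1 < nxt n (TB k S B) r - elt (TB k S B) r := by
    rw [nxt_eq hTB]; omega
  refine ⟨r, hr1, hr2, hgap, (odd_iff_mod _ _).2 hp, ?_⟩
  obtain ⟨hSr, heltSr⟩ := step_elt hTB hr1 hr2 (by rw [nxt_eq hTB]; omega)
  obtain ⟨hTB', helt'⟩ := TB_spec hS ((B.erase_subset r).trans hB)
  apply ext_elt hTB' hSr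
  intro j h1 h2
  rw [helt' j h1 h2, heltSr j h1 h2, helt j h1 h2]
  unfold gB
  obtain ⟨-, -, -, h4, -⟩ := inS_facts hS hB hr
  by_cases hjr : j = r
  · subst hjr
    rw [if_pos hr, if_pos rfl, if_neg (Finset.notMem_erase _ _)]
    omega
  · rw [if_neg hjr]
    by_cases hjB : j ∈ B
    · rw [if_pos hjB, if_pos (Finset.mem_erase.2 ⟨hjr, hjB⟩)]
      omega
    · rw [if_neg hjB, if_neg (fun h => hjB (Finset.mem_of_mem_erase h))]
      omega

lemma TB_le (hS : S ∈ Sset n k) (hout : OutS n k S = ∅) :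
    ∀ N (B : Finset ℕ), B.card ≤ N → B ⊆ InS k S → AdmLE n k (TB k S B) S := by
  intro N
  induction N with
  | zero =>
    intro B hcard hB
    have : B = ∅ := Finset.card_eq_zero.1 (by omega)
    subst this
    rw [TB_empty hS]
    exact Relation.ReflTransGen.refl
  | succ N ih =>
    intro B hcard hB
    rcases Finset.eq_empty_or_nonempty B with rfl | ⟨r, hr⟩
    · rw [TB_empty hS]
      exact Relation.ReflTransGen.refl
    · have hstep := TB_step hS hout hB hr
      have hrec := ih (B.erase r) (by have := Finset.card_erase_of_mem hr; omega)
        ((B.erase_subset r).trans hB)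
      exact Relation.ReflTransGen.head hstep hrec

lemma TB_chain (hS : S ∈ Sset n k) (hout : OutS n k S = ∅) :
    ∀ N (B B' : Finset ℕ), B.card ≤ N → B' ⊆ B → B ⊆ InS k S →
      AdmLE n k (TB k S B) (TB k S B') := by
  intro N
  induction N with
  | zero =>
    intro B B' hcard hB' hB
    have : B = ∅ := Finset.card_eq_zero.1 (by omega)
    subst this
    have : B' = ∅ := Finset.subset_empty.1 hB'
    subst this
    exact Relation.ReflTransGen.refl
  | succ N ih =>
    intro B B' hcard hB' hB
    by_cases hBB : B ⊆ B'
    · have : B = B' := Finset.Subset.antisymm hBB hB'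
      subst this
      exact Relation.ReflTransGen.refl
    · obtain ⟨r, hrB, hrB'⟩ := Finset.not_subset.1 hBB
      have hstep := TB_step hS hout hB hrB
      have hrec := ih (B.erase r) B' (by have := Finset.card_erase_of_mem hrB; omega)
        (fun x hx => Finset.mem_erase.2 ⟨fun h => hrB' (h ▸ hx), hB' hx⟩)
        ((B.erase_subset r).trans hB)
      exact Relation.ReflTransGen.head hstep hrec

end TB

section Final
variable {n k : ℕ} {S : Finset ℕ}

lemma sset_of_step {T U : Finset ℕ} (hT : T ∈ Sset n k) (h : AdmStep n k T U) :
    U ∈ Sset n k := by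
  obtain ⟨r, h1, h2, hgap, -, rfl⟩ := h
  have := elt_lt_nxt hT h1 h2
  exact (step_elt hT h1 h2 (by omega)).1

lemma good_of_le (hS : S ∈ Sset n k) (hout : OutS n k S = ∅) :
    ∀ T, Relation.ReflTransGen (AdmStep n k) T S → T ∈ Sset n k → Good n k S T := by
  intro T h
  induction h using Relation.ReflTransGen.head_induction_on with
  | refl => intro _; exact good_self hS hout
  | @head a c hstep htail ih =>
    intro ha
    have hc := sset_of_step ha hstep
    exact (step_back hS ha (ih hc) hstep).1

lemma out_anti (hS : S ∈ Sset n k) (hout : OutS n k S = ∅) {T' : Finset ℕ}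
    (hT'le : AdmLE n k T' S) :
    ∀ T, Relation.ReflTransGen (AdmStep n k) T T' → T ∈ Sset n k →
      OutS n k T' ⊆ OutS n k T := by
  intro T h
  induction h using Relation.ReflTransGen.head_induction_on with
  | refl => intro _; exact Finset.Subset.refl _
  | @head a c hstep htail ih =>
    intro ha
    have hc := sset_of_step ha hstep
    have hgc : Good n k S c := good_of_le hS hout c (htail.trans hT'le) hc
    obtain ⟨-, r, -, hOut⟩ := step_back hS ha hgc hstep
    refine (ih hc).trans ?_
    rw [hOut]
    exact Finset.subset_insert _ _

lemma eq_TB (hS : S ∈ Sset n k) {T : Finset ℕ} (hG : Good n k S T) :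
    T = TB k S (OutS n k T) := by
  obtain ⟨hT, hsub, heq⟩ := hG
  obtain ⟨hTB, helt⟩ := TB_spec hS hsub
  apply ext_elt hT hTB
  intro r h1 h2
  rw [helt r h1 h2]
  have h0 := heq r h1 h2
  unfold gB
  by_cases hm : r ∈ OutS n k T
  · rw [if_pos hm]; rw [if_pos hm] at h0; omega
  · rw [if_neg hm]; rw [if_neg hm] at h0; omega

end Final

/-- for `S ∈ {n;k}` with `Out(S) = ∅`, the map `T ↦ Out(T)` is a bijection from
`{T ∈ {n;k} : T ≤_adm S}` onto the subsets of `In(S)`, and it is order-reversing in both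
directions: `T ≤_adm T′ ↔ Out(T′) ⊆ Out(T)`; i.e. it is an isomorphism of posets onto the
opposite of the poset of subsets of `In(S)`. -/
theorem stmt10 (n k : ℕ) (hk : k ≤ n) (S : Finset ℕ)
    (hS : S ∈ Sset n k) (hout : OutS n k S = ∅) :
    (∀ T, T ∈ Sset n k → AdmLE n k T S → OutS n k T ⊆ InS k S) ∧
    (∀ T T', T ∈ Sset n k → AdmLE n k T S → T' ∈ Sset n k → AdmLE n k T' S →
      OutS n k T = OutS n k T' → T = T') ∧
    (∀ B ⊆ InS k S, ∃ T, T ∈ Sset n k ∧ AdmLE n k T S ∧ OutS n k T = B) ∧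
    (∀ T T', T ∈ Sset n k → AdmLE n k T S → T' ∈ Sset n k → AdmLE n k T' S →
      (AdmLE n k T T' ↔ OutS n k T' ⊆ OutS n k T)) := by
  refine ⟨?_, ?_, ?_, ?_⟩
  · intro T hT hle
    exact (good_of_le hS hout T hle hT).2.1
  · intro T T' hT hle hT' hle' hOut
    have h1 := eq_TB hS (good_of_le hS hout T hle hT)
    have h2 := eq_TB hS (good_of_le hS hout T' hle' hT')
    rw [h1, h2, hOut]
  · intro B hB
    exact ⟨TB k S B, (TB_spec hS hB).1, TB_le hS hout B.card B le_rfl hB,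
      TB_out hS hout hB⟩
  · intro T T' hT hle hT' hle'
    constructor
    · intro h
      exact out_anti hS hout hle' T h hT
    · intro hsub
      have hG := good_of_le hS hout T hle hT
      have hG' := good_of_le hS hout T' hle' hT'
      rw [eq_TB hS hG, eq_TB hS hG']
      exact TB_chain hS hout (OutS n k T).card _ _ le_rfl hsub hG.2.1
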